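/- Let $R$ be a commutative ring, $M$ a finitely generated $R$-module, and $\partial$ a derivation of $R$. Suppose $M$ carries an additive map $\nabla_\partial : M \to M$ satisfying the Leibniz rule $\nabla_\partial(a m) = \partial(a) m + a \nabla_\partial(m)$ for all $a \in R$, $m \in M$. Then every Fitting ideal $\mathrm{Fitt}_r(M)$ of $M$ is invariant under $\partial$: $\partial(\mathrm{Fitt}_r(M)) \subseteq \mathrm{Fitt}_r(M)$. -/

import Mathlib

open Finset Matrix

section helpers
variable {R : Type*} [CommRing R]

/-- Leibniz rule for finite products. -/
lemma stmt7_D_prod (D : Derivation ℤ R R) {ι : Type*} [DecidableEq ι] (s : Finset ι)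
    (f : ι → R) :
    D (∏ i ∈ s, f i) = ∑ i ∈ s, (∏ j ∈ s.erase i, f j) * D (f i) := by
  induction s using Finset.induction_on with
  | empty => simp
  | @insert a s ha ih =>
    rw [Finset.prod_insert ha, D.leibniz, ih, Finset.sum_insert ha, Finset.erase_insert ha,
      smul_eq_mul, smul_eq_mul, Finset.mul_sum]
    rw [add_comm]
    congr 1
    refine Finset.sum_congr rfl fun i hi => ?_
    rw [show (insert a s).erase i = insert a (s.erase i) from
      Finset.erase_insert_of_ne (by rintro rfl; exact ha hi),
      Finset.prod_insert (fun h => ha (Finset.mem_of_mem_erase h))]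
    ring

/-- Derivation of a determinant, row form. -/
lemma stmt7_D_det (D : Derivation ℤ R R) {m : ℕ} (X : Matrix (Fin m) (Fin m) R) :
    D X.det = ∑ k, (X.updateRow k fun j => D (X k j)).det := by
  simp_rw [Matrix.det_apply]
  rw [map_sum, Finset.sum_comm]
  refine Finset.sum_congr rfl fun σ _ => ?_
  rw [Units.smul_def, Derivation.map_smul, stmt7_D_prod, Finset.smul_sum]
  rw [← Equiv.sum_comp σ⁻¹ (fun k => (Equiv.Perm.sign σ : ℤ) •
    ((∏ j ∈ Finset.univ.erase k, X (σ j) j) * D (X (σ k) k)))]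
  refine Finset.sum_congr rfl fun k _ => ?_
  simp only [show σ (σ⁻¹ k) = k from Equiv.Perm.eq_inv_iff_eq.mp rfl, Units.smul_def]
  congr 1
  rw [← Finset.mul_prod_erase Finset.univ _ (Finset.mem_univ (σ⁻¹ k)),
    show σ (σ⁻¹ k) = k from Equiv.Perm.eq_inv_iff_eq.mp rfl, Matrix.updateRow_self]
  rw [mul_comm]
  congr 1
  refine Finset.prod_congr rfl fun i hi => ?_
  rw [Matrix.updateRow_ne]
  intro h
  exact (Finset.ne_of_mem_erase hi) (by rw [← h, show σ⁻¹ (σ i) = i from Equiv.Perm.inv_eq_iff_eq.mpr rfl])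

lemma stmt7_cramer_eq_sum {m : ℕ} (A : Matrix (Fin m) (Fin m) R) (b : Fin m → R) (k : Fin m) :
    Matrix.cramer A b k = ∑ j, b j * Matrix.cramer A (Pi.single j 1) k := by
  conv_lhs => rw [← Finset.univ_sum_single b]
  rw [map_sum, Finset.sum_apply]
  refine Finset.sum_congr rfl fun j _ => ?_
  have h : Pi.single j (b j) = b j • (Pi.single j 1 : Fin m → R) := by
    rw [← Pi.single_smul, smul_eq_mul, mul_one]
  rw [h, LinearMap.map_smul, Pi.smul_apply, smul_eq_mul]

lemma stmt7_det_updateRow {m : ℕ} (X : Matrix (Fin m) (Fin m) R) (k : Fin m) (b : Fin m → R) :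
    (X.updateRow k b).det = ∑ j, b j * X.adjugate j k := by
  rw [← Matrix.cramer_transpose_apply, stmt7_cramer_eq_sum]
  refine Finset.sum_congr rfl fun j _ => ?_
  congr 1

lemma stmt7_det_updateCol {m : ℕ} (X : Matrix (Fin m) (Fin m) R) (k : Fin m) (b : Fin m → R) :
    (X.updateCol k b).det = ∑ j, b j * X.adjugate k j := by
  rw [← Matrix.cramer_apply, stmt7_cramer_eq_sum]
  refine Finset.sum_congr rfl fun j _ => ?_
  congr 1
  have : Matrix.cramer X (Pi.single j 1) k = Matrix.cramer (Xᵀ)ᵀ (Pi.single j 1) k := by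
    rw [Matrix.transpose_transpose]
  rw [this, show Matrix.cramer (Xᵀ)ᵀ (Pi.single j 1) k = (Xᵀ).adjugate j k from by
    rw [Matrix.adjugate_def]; rfl, ← Matrix.adjugate_transpose, Matrix.transpose_apply]

lemma stmt7_row_col_sum {m : ℕ} (X U : Matrix (Fin m) (Fin m) R) :
    ∑ k, (X.updateRow k (U k)).det = ∑ k, (X.updateCol k (fun i => U i k)).det := by
  simp_rw [stmt7_det_updateRow, stmt7_det_updateCol]
  exact Finset.sum_comm

variable {M : Type*} [AddCommGroup M] [Module R M]

lemma stmt7_pi_apply {n : ℕ} (π : (Fin n → R) →ₗ[R] M) (u : Fin n → R) :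
    π u = ∑ k, u k • π (Pi.single k 1) := by
  conv_lhs => rw [← Finset.univ_sum_single u]
  rw [map_sum]
  refine Finset.sum_congr rfl fun k _ => ?_
  rw [show Pi.single k (u k) = u k • (Pi.single k 1 : Fin n → R) from by
    rw [← Pi.single_smul, smul_eq_mul, mul_one], LinearMap.map_smul]

/-- Core: the derivation of a generator of the Fitting ideal lies in the span of
the generators for the same presentation. -/
lemma stmt7_core (D : Derivation ℤ R R) (nabla : M →+ M)
    (hL : ∀ (a : R) (m : M), nabla (a • m) = D a • m + a • nabla m)
    (r n m : ℕ) (π : (Fin n → R) →ₗ[R] M) (hπ : Function.Surjective π)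
    (hm : m + r = n) (v : Fin m → (Fin n → R)) (g : Fin m → Fin n)
    (hv : ∀ i, π (v i) = 0) :
    D (Matrix.det (Matrix.of fun i j : Fin m => v i (g j))) ∈
      Ideal.span { d : R | ∃ (m' : ℕ) (_ : m' + r = n) (v' : Fin m' → (Fin n → R))
        (g' : Fin m' → Fin n), (∀ i, π (v' i) = 0) ∧
        d = Matrix.det (Matrix.of fun i j : Fin m' => v' i (g' j)) } := by
  classical
  set Sset : Set R := { d : R | ∃ (m' : ℕ) (_ : m' + r = n) (v' : Fin m' → (Fin n → R))
        (g' : Fin m' → Fin n), (∀ i, π (v' i) = 0) ∧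
        d = Matrix.det (Matrix.of fun i j : Fin m' => v' i (g' j)) } with hSset
  choose a ha using fun l => hπ (nabla (π (Pi.single l 1)))
  set W : Fin m → Fin n → R := fun i k => D (v i k) + ∑ l, v i l * a l k with hWdef
  have hW : ∀ i, π (W i) = 0 := by
    intro i
    have h0 : nabla (π (v i)) = 0 := by rw [hv i, map_zero]
    rw [stmt7_pi_apply π (v i), map_sum] at h0
    simp_rw [hL] at h0
    rw [Finset.sum_add_distrib] at h0
    simp_rw [← ha, stmt7_pi_apply π (a _), Finset.smul_sum, smul_smul] at h0
    rw [stmt7_pi_apply π (W i)]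
    simp_rw [hWdef, add_smul, Finset.sum_smul]
    rw [Finset.sum_add_distrib]
    rw [Finset.sum_comm (γ := Fin n)] at h0
    convert h0 using 2
  set X : Matrix (Fin m) (Fin m) R := Matrix.of fun i j => v i (g j) with hXdef
  set U : Matrix (Fin m) (Fin m) R :=
    Matrix.of (fun k j => ∑ l, v k l * a l (g j)) with hUdef
  have hDX : ∀ k : Fin m, (fun j => D (X k j)) =
      (fun j' => W k (g j')) + ((-1 : R) • U k) := by
    intro k
    funext j
    simp only [Pi.add_apply]
    simp only [hXdef, hWdef, hUdef, Matrix.of_apply, Pi.smul_apply, smul_eq_mul]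
    ring
  have step1 : D X.det = (∑ k, (X.updateRow k fun j => W k (g j)).det)
      + (-1 : R) * ∑ k, (X.updateRow k (U k)).det := by
    rw [stmt7_D_det D X]
    rw [Finset.mul_sum, ← Finset.sum_add_distrib]
    refine Finset.sum_congr rfl fun k _ => ?_
    rw [hDX k, Matrix.det_updateRow_add, Matrix.det_updateRow_smul]
  have hmem1 : ∀ k : Fin m, (X.updateRow k fun j => W k (g j)).det ∈ Ideal.span Sset := by
    intro k
    refine Ideal.subset_span ?_
    refine ⟨m, hm, Function.update v k (W k), g, ?_, ?_⟩
    · intro i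
      by_cases h : i = k
      · subst h; rw [Function.update_self]; exact hW i
      · rw [Function.update_of_ne h]; exact hv i
    · congr 1
      ext i j
      by_cases h : i = k
      · subst h; simp [Matrix.updateRow_apply, Function.update_self]
      · simp [Matrix.updateRow_apply, h, Function.update_of_ne h, hXdef]
  have hmem2 : (∑ k, (X.updateRow k (U k)).det) ∈ Ideal.span Sset := by
    rw [stmt7_row_col_sum]
    refine Ideal.sum_mem _ fun k _ => ?_
    have hcol : (fun i => U i k) = ∑ l, a l (g k) • (fun i : Fin m => v i l) := by
      funext i
      simp only [hUdef, Matrix.of_apply, Finset.sum_apply, Pi.smul_apply, smul_eq_mul]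
      exact Finset.sum_congr rfl fun l _ => mul_comm _ _
    rw [← Matrix.cramer_apply, hcol, map_sum, Finset.sum_apply]
    refine Ideal.sum_mem _ fun l _ => ?_
    rw [LinearMap.map_smul, Pi.smul_apply, smul_eq_mul]
    refine Ideal.mul_mem_left _ _ ?_
    rw [Matrix.cramer_apply]
    refine Ideal.subset_span ⟨m, hm, v, Function.update g k l, hv, ?_⟩
    congr 1
    ext i j
    by_cases h : j = k
    · subst h; simp [Matrix.updateCol_apply, Function.update_self]
    · simp [Matrix.updateCol_apply, h, Function.update_of_ne h, hXdef]
  rw [step1]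
  exact Ideal.add_mem _ (Ideal.sum_mem _ fun k _ => hmem1 k)
    (Ideal.mul_mem_left _ _ hmem2)


end helpers

/-- The `r`-th Fitting ideal of a module `M`: for a presentation
`(Fin n → R) →ₗ M` (surjective), it is generated by the `(n - r) × (n - r)`
minors of matrices whose rows are relations (elements of the kernel). -/
def fittingIdeal (R : Type*) [CommRing R] (M : Type*) [AddCommGroup M] [Module R M]
    (r : ℕ) : Ideal R :=
  ⨆ (n : ℕ) (π : (Fin n → R) →ₗ[R] M) (_ : Function.Surjective π),
    Ideal.span { d : R | ∃ (m : ℕ) (_ : m + r = n) (v : Fin m → (Fin n → R))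
      (g : Fin m → Fin n), (∀ i, π (v i) = 0) ∧
      d = Matrix.det (Matrix.of fun i j : Fin m => v i (g j)) }

/-- if a finitely generated module `M` over `R` carries an additive
operator satisfying the Leibniz rule along a derivation `∂` of `R`, then every
Fitting ideal of `M` is invariant under `∂`. -/
theorem stmt_7 (R : Type*) [CommRing R] (M : Type*) [AddCommGroup M] [Module R M]
    [Module.Finite R M] (D : Derivation ℤ R R) (nabla : M →+ M)
    (hL : ∀ (a : R) (m : M), nabla (a • m) = D a • m + a • nabla m) :
    ∀ r : ℕ, ∀ x ∈ fittingIdeal R M r, D x ∈ fittingIdeal R M r := by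
  intro r x hx
  classical
  set T : Set R := ⋃ (n : ℕ), ⋃ (π : (Fin n → R) →ₗ[R] M),
      ⋃ (_ : Function.Surjective π),
      { d : R | ∃ (m : ℕ) (_ : m + r = n) (v : Fin m → (Fin n → R))
        (g : Fin m → Fin n), (∀ i, π (v i) = 0) ∧
        d = Matrix.det (Matrix.of fun i j : Fin m => v i (g j)) } with hT
  have hfit : fittingIdeal R M r = Ideal.span T := by
    rw [fittingIdeal, hT]
    simp_rw [Ideal.span_iUnion]
  rw [hfit] at hx ⊢
  have key : ∀ t ∈ T, D t ∈ Ideal.span T := by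
    intro t ht
    rw [hT] at ht
    simp only [Set.mem_iUnion] at ht
    obtain ⟨n, π, hπ, m, hm, v, g, hv, rfl⟩ := ht
    refine Submodule.span_mono ?_ (stmt7_core D nabla hL r n m π hπ hm v g hv)
    intro y hy
    rw [hT]
    simp only [Set.mem_iUnion]
    exact ⟨n, π, hπ, hy⟩
  refine Submodule.span_induction (p := fun y _ => D y ∈ Ideal.span T) key ?_ ?_ ?_ hx
  · show D (0 : R) ∈ Ideal.span T
    rw [map_zero]; exact Ideal.zero_mem _
  · intro y z _ _ hy hz
    show D (y + z) ∈ Ideal.span T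
    rw [map_add]
    exact Ideal.add_mem _ hy hz
  · intro c y hymem hyD
    show D (c • y) ∈ Ideal.span T
    rw [smul_eq_mul, D.leibniz, smul_eq_mul, smul_eq_mul]
    exact Ideal.add_mem _ (Ideal.mul_mem_left _ _ hyD) (Ideal.mul_mem_right _ _ hymem)
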